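/- Under event ℰ', P̃ ∖ P(M_T) ⊆ P̂: every user of P̃ not belonging to a mediator of M_T has cost strictly less than c(p̂), hence is assignable. -/

import Mathlib

set_option maxHeartbeats 1000000

/-- Size of the canonical assignment restricted to users `PT` and slots `BT`
(indices sorted increasingly = increasing cost / decreasing value order). -/
noncomputable def canonSize (c v : ℕ → ℝ) (PT BT : Finset ℕ) : ℕ :=
  (List.zip ((PT.sort (· ≤ ·)).map c) ((BT.sort (· ≤ ·)).map v)).countP
    (fun x => decide (x.1 < x.2))

-- downward closed finset = range
lemma dc_eq_range (S : Finset ℕ) (h : ∀ j ∈ S, ∀ i ≤ j, i ∈ S) :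
    S = Finset.range S.card := by
  ext i
  simp only [Finset.mem_range]
  constructor
  · intro hi
    have hsub : Finset.range (i+1) ⊆ S := by
      intro j hj
      exact h i hi j (Nat.lt_succ_iff.mp (Finset.mem_range.mp hj))
    have := Finset.card_le_card hsub
    simpa using this
  · intro hi
    by_contra hiS
    have hsub : S ⊆ Finset.range i := by
      intro j hj
      rw [Finset.mem_range]
      by_contra hji
      exact hiS (h j hj i (Nat.le_of_not_lt hji))
    have := Finset.card_le_card hsub
    simp at this
    omega

-- filter card = countP of sort
lemma card_filter_eq_countP (S : Finset ℕ) (p : ℕ → Prop) [DecidablePred p] :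
    (S.filter p).card = (S.sort (· ≤ ·)).countP (fun x => decide (p x)) := by
  have h1 : (S.filter p).card = Multiset.countP p S.val := by
    rw [Finset.filter, Finset.card_def]
    exact (Multiset.countP_eq_card_filter p S.val).symm
  rw [h1, ← Finset.sort_eq S (· ≤ ·), Multiset.coe_countP]

-- sorted list: element at index i < τ if i < count of elements < τ
lemma sorted_get_lt (l : List ℕ) (hs : l.Pairwise (· ≤ ·)) (t : ℕ) (i : ℕ)
    (hi : i < l.length) (hcnt : i < l.countP (fun x => decide (x < t))) :
    l[i] < t := by
  by_contra hge
  push_neg at hge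
  -- all elements of l.drop (i+1) are ≥ l[i] ≥ t, and l[i] itself ≥ t
  have hdecomp : l = l.take i ++ l[i] :: l.drop (i+1) := by
    rw [← List.drop_eq_getElem_cons hi, List.take_append_drop]
  have hcount : l.countP (fun x => decide (x < t))
      = (l.take i).countP (fun x => decide (x < t))
        + (l[i] :: l.drop (i+1)).countP (fun x => decide (x < t)) := by
    conv_lhs => rw [hdecomp]
    rw [List.countP_append]
  have hfail : ∀ y ∈ l.drop (i+1), ¬ (y < t) := by
    intro y hy hyt
    have hx : l[i] ∈ l.take (i+1) := by
      rw [List.mem_take_iff_getElem]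
      exact ⟨i, by omega, rfl⟩
    have := hs.rel_of_mem_take_of_mem_drop hx hy
    omega
  have hc2 : (l[i] :: l.drop (i+1)).countP (fun x => decide (x < t)) = 0 := by
    rw [List.countP_eq_zero]
    intro y hy
    simp only [List.mem_cons] at hy
    rcases hy with rfl | hy
    · simp; omega
    · simpa using hfail y hy
  have hc1 : (l.take i).countP (fun x => decide (x < t)) ≤ i := by
    calc (l.take i).countP _ ≤ (l.take i).length := List.countP_le_length
    _ ≤ i := by simp
  omega

lemma countP_ge_of_prefix (z : List (ℝ × ℝ)) (M : ℕ) (hM : M ≤ z.length)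
    (h : ∀ j (hj : j < M), z[j].1 < z[j].2) :
    M ≤ z.countP (fun x => decide (x.1 < x.2)) := by
  have hdecomp : z = z.take M ++ z.drop M := (List.take_append_drop M z).symm
  have hall : ∀ x ∈ z.take M, (fun x : ℝ × ℝ => decide (x.1 < x.2)) x = true := by
    intro x hx
    rw [List.mem_take_iff_getElem] at hx
    obtain ⟨j, hj, rfl⟩ := hx
    simpa using h j (lt_of_lt_of_le (lt_min_iff.mp hj).1 le_rfl)
  have h1 : (z.take M).countP (fun x => decide (x.1 < x.2)) = (z.take M).length :=
    List.countP_eq_length.mpr hall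
  have h2 : (z.take M).length = M := by simp [hM]
  calc M = (z.take M).countP (fun x => decide (x.1 < x.2)) := by rw [h1, h2]
    _ ≤ z.countP (fun x => decide (x.1 < x.2)) := by
        conv_rhs => rw [hdecomp]
        rw [List.countP_append]; omega

lemma canonSize_ge (c v : ℕ → ℝ) (PT BT : Finset ℕ) (t : ℕ)
    (hlt : ∀ i j : ℕ, i < t → j < t → c i < v j) :
    min (PT.filter (fun x => x < t)).card (BT.filter (fun x => x < t)).card
      ≤ canonSize c v PT BT := by
  set lP := PT.sort (· ≤ ·) with hlP
  set lB := BT.sort (· ≤ ·) with hlB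
  set z := List.zip (lP.map c) (lB.map v) with hz
  set M := min (PT.filter (fun x => x < t)).card (BT.filter (fun x => x < t)).card with hM
  have hzlen : z.length = min lP.length lB.length := by
    simp [hz, List.length_zip]
  have haP : (PT.filter (fun x => x < t)).card ≤ lP.length := by
    rw [hlP, Finset.length_sort]; exact Finset.card_filter_le _ _
  have haB : (BT.filter (fun x => x < t)).card ≤ lB.length := by
    rw [hlB, Finset.length_sort]; exact Finset.card_filter_le _ _
  have hMlen : M ≤ z.length := by
    rw [hzlen]; exact le_min (le_trans (min_le_left _ _) haP) (le_trans (min_le_right _ _) haB)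
  apply countP_ge_of_prefix z M hMlen
  intro j hj
  have hjP : j < lP.length := lt_of_lt_of_le hj hMlen |>.trans_le (by rw [hzlen]; exact min_le_left _ _)
  have hjB : j < lB.length := lt_of_lt_of_le hj hMlen |>.trans_le (by rw [hzlen]; exact min_le_right _ _)
  have hgP : lP[j] < t := by
    apply sorted_get_lt lP (Finset.pairwise_sort _ _) t j hjP
    rw [← card_filter_eq_countP]
    exact lt_of_lt_of_le hj (min_le_left _ _)
  have hgB : lB[j] < t := by
    apply sorted_get_lt lB (Finset.pairwise_sort _ _) t j hjB
    rw [← card_filter_eq_countP]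
    exact lt_of_lt_of_le hj (min_le_right _ _)
  have : z[j] = (c lP[j], v lB[j]) := by
    simp [hz, List.getElem_zip]
  rw [this]
  exact hlt _ _ hgP hgB




/-- Under event `ℰ'`, `P̃ ∖ P(M_T) ⊆ P̂`: every user of
`P̃` (the `k = ⌈(1−6r⁻¹α^{1/3})τ⌉` cheapest users of `P_o`, here the indices
`Finset.range k`, with `P̃` nonempty) that does not belong to a mediator of
`M_T` has cost strictly less than `c p̂`, hence is assignable. -/
theorem stmt_12 (n m : ℕ) (c v : ℕ → ℝ)
    (hc : StrictMono c) (hv : StrictAnti v)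
    (hcv : ∀ i j : ℕ, c i ≠ v j)
    (PT BT : Finset ℕ) (hPT : PT ⊆ Finset.range n) (hBT : BT ⊆ Finset.range m)
    (r α : ℝ) (hr : 0 < r) (hr2 : r ≤ 1 / 2)
    (Po : Finset ℕ)
    (hPo : Po = (Finset.range (min n m)).filter (fun i => c i < v i))
    (τ : ℕ) (hτ : τ = Po.card) (hτpos : 0 < τ)
    (hα : 1 / (τ : ℝ) ≤ α) (hα1 : α ≤ 1)
    (s : ℕ) (hs : s = canonSize c v PT BT)
    (L : ℕ) (hL : L = ⌈(1 - 2 * r⁻¹ * α ^ ((1 : ℝ) / 3)) * (s : ℝ)⌉₊)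
    (hLpos : 0 < L)
    (phat : ℕ) (hphat₁ : phat ∈ PT)
    (hphat₂ : (PT.filter (fun q => q ≤ phat)).card = L)
    (k : ℕ) (hk : k = ⌈(1 - 6 * r⁻¹ * α ^ ((1 : ℝ) / 3)) * (τ : ℝ)⌉₊)
    (hkpos : 0 < k)
    (hE1 : |((Po ∩ PT).card : ℝ) - r * τ| ≤ α ^ ((1 : ℝ) / 3) * τ)
    (hE2 : |((Po ∩ BT).card : ℝ) - r * τ| ≤ α ^ ((1 : ℝ) / 3) * τ)
    (hE3 : |((Finset.range k ∩ PT).card : ℝ) - r * k| ≤ α ^ ((1 : ℝ) / 3) * τ)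
    (hE4 : |((Finset.range k ∩ BT).card : ℝ) - r * k| ≤ α ^ ((1 : ℝ) / 3) * τ) :
    ∀ p ∈ Finset.range k, p ∉ PT → c p < c phat := by
  -- setup
  set β : ℝ := α ^ ((1 : ℝ) / 3) with hβ
  have hτR : (0:ℝ) < τ := by exact_mod_cast hτpos
  have hαpos : 0 < α := lt_of_lt_of_le (by positivity) hα
  have hβpos : 0 < β := Real.rpow_pos_of_pos hαpos _
  have hαβ : α ≤ β := by
    have h := Real.rpow_le_rpow_of_exponent_ge hαpos hα1 (by norm_num : (1:ℝ)/3 ≤ 1)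
    rw [Real.rpow_one] at h
    exact h
  have hβτ : 1 ≤ β * τ := by
    have h1 : (1:ℝ) ≤ α * τ := by
      rw [div_le_iff₀ hτR] at hα; linarith
    nlinarith
  -- Po = range τ
  have hPoDC : ∀ j ∈ Po, ∀ i ≤ j, i ∈ Po := by
    intro j hj i hij
    rw [hPo, Finset.mem_filter, Finset.mem_range] at hj ⊢
    exact ⟨lt_of_le_of_lt hij hj.1,
      lt_of_le_of_lt (hc.monotone hij) (lt_of_lt_of_le hj.2 (hv.antitone hij))⟩
  have hPoR : Po = Finset.range τ := by rw [hτ]; exact dc_eq_range Po hPoDC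
  have hlt : ∀ i j : ℕ, i < τ → j < τ → c i < v j := by
    intro i j hi hj
    have hcv' : ∀ x, x < τ → c x < v x := by
      intro x hx
      have : x ∈ Po := by rw [hPoR]; exact Finset.mem_range.mpr hx
      rw [hPo, Finset.mem_filter] at this
      exact this.2
    rcases le_or_gt i j with h | h
    · exact lt_of_le_of_lt (hc.monotone h) (hcv' j hj)
    · exact lt_of_lt_of_le (hcv' i hi) (hv.antitone h.le)
  -- s lower bound
  have hint : ∀ S : Finset ℕ, Po ∩ S = S.filter (fun x => x < τ) := by
    intro S
    ext x
    rw [hPoR]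
    simp only [Finset.mem_inter, Finset.mem_filter, Finset.mem_range]
    tauto
  have hsge : min ((Po ∩ PT).card) ((Po ∩ BT).card) ≤ s := by
    rw [hs, hint PT, hint BT]
    exact canonSize_ge c v PT BT τ hlt
  have ha : r * τ - β * τ ≤ ((Po ∩ PT).card : ℝ) := by
    have := abs_le.mp hE1; linarith [this.1]
  have hb : r * τ - β * τ ≤ ((Po ∩ BT).card : ℝ) := by
    have := abs_le.mp hE2; linarith [this.1]
  have hsR : r * τ - β * τ ≤ (s : ℝ) := by
    have : (min ((Po ∩ PT).card) ((Po ∩ BT).card) : ℝ) ≤ (s:ℝ) := by exact_mod_cast hsge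
    exact le_trans (le_min ha hb) this
  have hsnn : (0:ℝ) ≤ (s:ℝ) := Nat.cast_nonneg _
  -- positivity of coefficient
  have hypos : 0 < (1 - 2 * r⁻¹ * β) * (s : ℝ) := by
    rw [hL] at hLpos
    exact Nat.ceil_pos.mp hLpos
  have hcoef : 0 < 1 - 2 * r⁻¹ * β := by
    by_contra hcon
    push_neg at hcon
    nlinarith
  have hrr : r * r⁻¹ = 1 := mul_inv_cancel₀ hr.ne'
  -- L lower bound
  have hLge : r * τ - 3 * β * τ ≤ (L : ℝ) := by
    have h1 : (1 - 2 * r⁻¹ * β) * (s : ℝ) ≤ (L : ℝ) := by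
      rw [hL]; exact Nat.le_ceil _
    have h2 : (1 - 2 * r⁻¹ * β) * (r * τ - β * τ) ≤ (1 - 2 * r⁻¹ * β) * (s:ℝ) :=
      mul_le_mul_of_nonneg_left hsR hcoef.le
    have h3 : r * τ - 3 * β * τ ≤ (1 - 2 * r⁻¹ * β) * (r * τ - β * τ) := by
      have hb2 : 0 ≤ r⁻¹ * β * β * τ := by positivity
      nlinarith [hrr]
    linarith
  -- k upper bound
  have hkarg : 0 < (1 - 6 * r⁻¹ * β) * (τ : ℝ) := by
    rw [hk] at hkpos
    exact Nat.ceil_pos.mp hkpos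
  have hkub : (k : ℝ) < (1 - 6 * r⁻¹ * β) * (τ : ℝ) + 1 := by
    rw [hk]; exact Nat.ceil_lt_add_one hkarg.le
  have hcardub : ((Finset.range k ∩ PT).card : ℝ) ≤ r * k + β * τ := by
    have := abs_le.mp hE3; linarith [this.2]
  -- card < L
  have hmain : ((Finset.range k ∩ PT).card : ℝ) < (L : ℝ) := by
    have h6 : r * ((1 - 6 * r⁻¹ * β) * (τ:ℝ) + 1) = r * τ - 6 * β * τ + r := by
      field_simp
    have h7 : r * (k:ℝ) < r * τ - 6 * β * τ + r := by
      rw [← h6]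
      exact (mul_lt_mul_of_pos_left hkub hr)
    linarith
  have hcardlt : (Finset.range k ∩ PT).card < L := by exact_mod_cast hmain
  -- find q ∈ PT with k ≤ q ≤ phat
  have hns : ¬ (PT.filter (fun q => q ≤ phat) ⊆ Finset.range k) := by
    intro hsub
    have hsub2 : PT.filter (fun q => q ≤ phat) ⊆ Finset.range k ∩ PT := by
      intro x hx
      exact Finset.mem_inter.mpr ⟨hsub hx, (Finset.mem_filter.mp hx).1⟩
    have := Finset.card_le_card hsub2
    omega
  obtain ⟨q, hq, hqk⟩ := Finset.not_subset.mp hns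
  rw [Finset.mem_filter] at hq
  rw [Finset.mem_range] at hqk
  push_neg at hqk
  intro p hp _
  rw [Finset.mem_range] at hp
  exact hc (by omega : p < phat)
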